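/- Let R be a normal excellent local ring, π: X → Spec(R) a birational projective morphism with X regular, D an ℝ-divisor on X, and Γ a prime divisor on X. Then Γ(X, O_X(⌊nD⌋)) = Γ(X, O_X(⌊n(D − γ_Γ(D)Γ)⌋)) for all n ∈ ℕ. -/

import Mathlib

universe u

/-- A regular local ring: a Noetherian local ring whose maximal ideal can be generated by
`dim A` elements. -/
def IsRegularLocalRing' (A : Type*) [CommRing A] [IsLocalRing A] : Prop :=
  IsNoetherianRing A ∧ ∃ s : Finset A,
    Ideal.span (s : Set A) = IsLocalRing.maximalIdeal A ∧
    (s.card : WithBot (WithTop ℕ)) = ringKrullDim A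

/-- A regular ring: a Noetherian ring all of whose localizations at primes are regular local
rings. -/
def IsRegularRing' (A : Type*) [CommRing A] : Prop :=
  IsNoetherianRing A ∧
    ∀ p : PrimeSpectrum A, IsRegularLocalRing' (Localization.AtPrime p.asIdeal)

/-- The `A`-algebra `B` is geometrically regular (a regular morphism): it is flat, and for
every prime `q` of `A` and every finite field extension `L` of the residue field `κ(q)`,
the ring `L ⊗_A B` is regular. -/
def Algebra.IsGeometricallyRegular (A B : Type u) [CommRing A] [CommRing B] [Algebra A B] :
    Prop :=
  Module.Flat A B ∧
    ∀ (q : PrimeSpectrum A) (L : Type u) [Field L] [Algebra A L]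
      [Algebra (IsLocalRing.ResidueField (Localization.AtPrime q.asIdeal)) L]
      [IsScalarTower A (IsLocalRing.ResidueField (Localization.AtPrime q.asIdeal)) L],
      FiniteDimensional (IsLocalRing.ResidueField (Localization.AtPrime q.asIdeal)) L →
      IsRegularRing' (TensorProduct A L B)

/-- `R` is a G-ring (Grothendieck ring): for every prime `p`, the formal fibers of `R_p` are
geometrically regular, i.e. the completion map `R_p → (R_p)^` is a regular morphism. -/
def IsGrothendieckRing (R : Type u) [CommRing R] : Prop :=
  ∀ p : PrimeSpectrum R,
    Algebra.IsGeometricallyRegular (Localization.AtPrime p.asIdeal)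
      (AdicCompletion (IsLocalRing.maximalIdeal (Localization.AtPrime p.asIdeal))
        (Localization.AtPrime p.asIdeal))

/-- `R` is J-2: every finitely generated `R`-algebra has open regular locus. -/
def IsJTwo (R : Type u) [CommRing R] : Prop :=
  ∀ (n : ℕ) (I : Ideal (MvPolynomial (Fin n) R)),
    IsOpen {p : PrimeSpectrum (MvPolynomial (Fin n) R ⧸ I) |
      IsRegularLocalRing' (Localization.AtPrime p.asIdeal)}

/-- A catenary ring: any two saturated chains of primes with the same endpoints have the
same length. -/
def IsCatenaryRing (A : Type*) [CommRing A] : Prop :=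
  ∀ c₁ c₂ : LTSeries (PrimeSpectrum A),
    c₁.head = c₂.head → c₁.last = c₂.last →
    (∀ i : Fin c₁.length, c₁.toFun i.castSucc ⋖ c₁.toFun i.succ) →
    (∀ i : Fin c₂.length, c₂.toFun i.castSucc ⋖ c₂.toFun i.succ) →
    c₁.length = c₂.length

/-- `R` is universally catenary: every finitely generated `R`-algebra is catenary. -/
def IsUniversallyCatenary (R : Type u) [CommRing R] : Prop :=
  ∀ (n : ℕ) (I : Ideal (MvPolynomial (Fin n) R)),
    IsCatenaryRing (MvPolynomial (Fin n) R ⧸ I)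

/-- An excellent ring: a Noetherian, universally catenary G-ring satisfying J-2. -/
def IsExcellentRing (R : Type u) [CommRing R] : Prop :=
  IsNoetherianRing R ∧ IsUniversallyCatenary R ∧ IsGrothendieckRing R ∧ IsJTwo R

/-- The data of a birational projective morphism `π : X → Spec R` with `X` regular
(a nonsingular model of the normal excellent local domain `R`), recorded through its divisor
theory: the type of prime divisors `E` on `X` (integral closed subschemes of codimension one)
together with the discrete valuations `ord_E = ν_E` of the function field `K = Frac R` of `X`
given by the one-dimensional regular (hence discrete valuation) local rings `O_{X,E}`. -/
structure RegularBirationalModel (R : Type*) [CommRing R] [IsDomain R] where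
  /-- The prime divisors on `X`. -/
  PrimeDivisor : Type*
  /-- `ord E f = ν_E(f)`, the order of vanishing of the rational function `f ∈ K` along the
  prime divisor `E` (the value at `f = 0` is irrelevant). -/
  ord : PrimeDivisor → FractionRing R → ℤ
  ord_mul : ∀ E (x y : FractionRing R), x ≠ 0 → y ≠ 0 →
    ord E (x * y) = ord E x + ord E y
  ord_add : ∀ E (x y : FractionRing R), x ≠ 0 → y ≠ 0 → x + y ≠ 0 →
    min (ord E x) (ord E y) ≤ ord E (x + y)
  /-- Each `O_{X,E}` is a discrete valuation ring with value group `ℤ`. -/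
  ord_surj : ∀ E (n : ℤ), ∃ x : FractionRing R, x ≠ 0 ∧ ord E x = n
  /-- Distinct prime divisors give distinct valuations. -/
  ord_injective : Function.Injective ord
  /-- A nonzero rational function has finitely many zeros and poles: `(f) = Σ_E ν_E(f) E`
  is a divisor. -/
  finite_support : ∀ x : FractionRing R, x ≠ 0 → {E | ord E x ≠ 0}.Finite
  /-- `π : X → Spec R`: every local ring `O_{X,E}` contains `R`. -/
  ord_nonneg : ∀ E (r : R), r ≠ 0 → 0 ≤ ord E (algebraMap R (FractionRing R) r)
  /-- `π` is proper and birational and `X` is normal: `Γ(X, O_X) = R`, i.e. a rational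
  function with no poles along any prime divisor of `X` belongs to `R`. -/
  globalSections : ∀ x : FractionRing R, x ≠ 0 → (∀ E, 0 ≤ ord E x) →
    ∃ r : R, algebraMap R (FractionRing R) r = x

namespace RegularBirationalModel

variable {R : Type*} [CommRing R] [IsDomain R] (M : RegularBirationalModel R)

/-- An ℝ-divisor `D = Σ aᵢ Eᵢ` on `X`, i.e. a finitely supported real-valued function on the
prime divisors of `X`. -/
def IsDivisor (D : M.PrimeDivisor → ℝ) : Prop := (Function.support D).Finite

/-- An effective divisor: all coefficients nonnegative. -/
def IsEffective (D : M.PrimeDivisor → ℝ) : Prop := ∀ E, 0 ≤ D E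

/-- Linear equivalence of ℝ-divisors: `D₁ ∼ D₂` iff `D₁ − D₂ = (f)` for some `f ∈ K`. -/
def LinEquiv (D₁ D₂ : M.PrimeDivisor → ℝ) : Prop :=
  ∃ x : FractionRing R, x ≠ 0 ∧ ∀ E, D₁ E - D₂ E = (M.ord E x : ℝ)

/-- `τ_Γ(D) = inf {ord_Γ(G) : G ≥ 0, G ∼ D}`. -/
noncomputable def tau (Γ : M.PrimeDivisor) (D : M.PrimeDivisor → ℝ) : ℝ :=
  sInf {t : ℝ | ∃ G : M.PrimeDivisor → ℝ, M.IsEffective G ∧ M.LinEquiv G D ∧ t = G Γ}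

/-- `γ_Γ(D) = inf {τ_Γ(mD)/m : m ∈ ℤ_{>0}}`. -/
noncomputable def gamma (Γ : M.PrimeDivisor) (D : M.PrimeDivisor → ℝ) : ℝ :=
  sInf {t : ℝ | ∃ m : ℕ, 0 < m ∧ t = M.tau Γ (fun E => m * D E) / m}

/-- The divisor `c Γ` supported on the single prime divisor `Γ`. -/
noncomputable def single (Γ : M.PrimeDivisor) (c : ℝ) : M.PrimeDivisor → ℝ :=
  open scoped Classical in fun E => if E = Γ then c else 0

/-- `Γ(X, O_X(⌊D⌋)) = {f ∈ K ∣ (f) + D ≥ 0} ⊆ K` (which only depends on `⌊D⌋` since the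
functions `ord_E` are integer-valued). -/
def sections (D : M.PrimeDivisor → ℝ) : Set (FractionRing R) :=
  {x | x = 0 ∨ ∀ E, 0 ≤ (M.ord E x : ℝ) + D E}

end RegularBirationalModel

/-- Lemma E. Let `R` be a normal excellent local ring, `π : X → Spec R` a
birational projective morphism with `X` regular, `D` an ℝ-divisor and `Γ` a prime divisor
on `X`.  Then `Γ(X, O_X(⌊nD⌋)) = Γ(X, O_X(⌊n(D − γ_Γ(D)Γ)⌋))` for all `n ∈ ℕ`. -/
theorem sections_eq_sections_sub_gamma_single {R : Type u} [CommRing R] [IsDomain R]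
    [IsIntegrallyClosed R] [IsLocalRing R] (hexc : IsExcellentRing R)
    (M : RegularBirationalModel R) (D : M.PrimeDivisor → ℝ) (hD : M.IsDivisor D)
    (Γ : M.PrimeDivisor) :
    ∀ n : ℕ, M.sections (fun E => n * D E)
      = M.sections (fun E => n * (D E - M.single Γ (M.gamma Γ D) E)) := by
  -- τ is always nonnegative
  have htau_nonneg : ∀ (Γ' : M.PrimeDivisor) (D' : M.PrimeDivisor → ℝ), 0 ≤ M.tau Γ' D' := by
    intro Γ' D'
    unfold RegularBirationalModel.tau
    rcases Set.eq_empty_or_nonempty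
        {t : ℝ | ∃ G, M.IsEffective G ∧ M.LinEquiv G D' ∧ t = G Γ'} with h | h
    · rw [h, Real.sInf_empty]
    · refine le_csInf h ?_
      rintro t ⟨G, hG, -, rfl⟩
      exact hG Γ'
  have htau_bdd : ∀ (Γ' : M.PrimeDivisor) (D' : M.PrimeDivisor → ℝ),
      BddBelow {t : ℝ | ∃ G, M.IsEffective G ∧ M.LinEquiv G D' ∧ t = G Γ'} := by
    intro Γ' D'
    refine ⟨0, ?_⟩
    rintro t ⟨G, hG, -, rfl⟩
    exact hG Γ'
  have hbdd : BddBelow {t : ℝ | ∃ m : ℕ, 0 < m ∧ t = M.tau Γ (fun E => m * D E) / m} := by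
    refine ⟨0, ?_⟩
    rintro t ⟨m, hm, rfl⟩
    exact div_nonneg (htau_nonneg _ _) (Nat.cast_nonneg m)
  have hγ : 0 ≤ M.gamma Γ D := by
    apply Real.sInf_nonneg
    rintro t ⟨m, hm, rfl⟩
    exact div_nonneg (htau_nonneg _ _) (Nat.cast_nonneg m)
  -- key inequality
  have key : ∀ (n : ℕ) (x : FractionRing R), 0 < n → x ≠ 0 →
      (∀ E, 0 ≤ (M.ord E x : ℝ) + n * D E) →
      (n : ℝ) * M.gamma Γ D ≤ (M.ord Γ x : ℝ) + n * D Γ := by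
    intro n x hn hx h
    have hnR : (0 : ℝ) < n := by exact_mod_cast hn
    have hτ : M.tau Γ (fun E => n * D E) ≤ (M.ord Γ x : ℝ) + n * D Γ := by
      unfold RegularBirationalModel.tau
      refine csInf_le (htau_bdd _ _) ?_
      refine ⟨fun E => (M.ord E x : ℝ) + n * D E, h, ⟨x, hx, fun E => by ring⟩, by ring⟩
    have hγle : M.gamma Γ D ≤ M.tau Γ (fun E => n * D E) / n :=
      csInf_le hbdd ⟨n, hn, rfl⟩
    calc (n : ℝ) * M.gamma Γ D ≤ (n : ℝ) * (M.tau Γ (fun E => n * D E) / n) := by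
            exact mul_le_mul_of_nonneg_left hγle hnR.le
      _ = M.tau Γ (fun E => n * D E) := by field_simp
      _ ≤ _ := hτ
  intro n
  ext x
  rcases eq_or_ne x 0 with rfl | hx
  · simp [RegularBirationalModel.sections]
  simp only [RegularBirationalModel.sections, Set.mem_setOf_eq, hx, false_or]
  constructor
  · intro h E
    rcases Nat.eq_zero_or_pos n with rfl | hn
    · simpa using h E
    by_cases hE : E = Γ
    · have hsΓ : M.single Γ (M.gamma Γ D) E = M.gamma Γ D := by
        simp [RegularBirationalModel.single, hE]
      rw [hsΓ, hE]
      have hk := key n x hn hx h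
      have hr : (n : ℝ) * (D Γ - M.gamma Γ D) = n * D Γ - n * M.gamma Γ D := by ring
      rw [hr]
      linarith
    · simp only [RegularBirationalModel.single, if_neg hE]
      have := h E
      linarith
  · intro h E
    have hE := h E
    have hsingle : 0 ≤ M.single Γ (M.gamma Γ D) E := by
      simp only [RegularBirationalModel.single]
      split
      · exact hγ
      · exact le_rfl
    have hns : 0 ≤ (n : ℝ) * M.single Γ (M.gamma Γ D) E :=
      mul_nonneg (Nat.cast_nonneg n) hsingle
    have hr : (n : ℝ) * (D E - M.single Γ (M.gamma Γ D) E)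
        = n * D E - n * M.single Γ (M.gamma Γ D) E := by ring
    rw [hr] at hE
    linarith
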